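/- Let ℓ ≥ 2 be an integer with ℓ ≡ 1 (mod 3) and let p ≥ 5 be a prime. Then for every positive integer m, ℓ(3ℓ+1) ≠ p·m² + m·(p−2) and ℓ(3ℓ+1) ≠ p·m² − m·(p−2). -/
import Mathlib


theorem stmt_0 (ℓ : ℤ) (hℓ : 2 ≤ ℓ) (hℓmod : ℓ % 3 = 1)
    (p : ℕ) (hp : p.Prime) (hp5 : 5 ≤ p) (m : ℤ) (hm : 0 < m) :
    ℓ * (3 * ℓ + 1) ≠ (p : ℤ) * m ^ 2 + m * ((p : ℤ) - 2) ∧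
    ℓ * (3 * ℓ + 1) ≠ (p : ℤ) * m ^ 2 - m * ((p : ℤ) - 2) := by
  have h3 : (p : ZMod 3) ≠ 0 := by
    have hd : ¬ (3 ∣ p) := by
      intro h
      have := (Nat.prime_dvd_prime_iff_eq Nat.prime_three hp).mp h
      omega
    simpa [ZMod.natCast_eq_zero_iff] using hd
  have hl : ((ℓ : ℤ) : ZMod 3) = 1 := by
    obtain ⟨k, hk⟩ : ∃ k, ℓ = 3 * k + 1 := ⟨ℓ / 3, by omega⟩
    subst hk
    push_cast
    rw [show (3 : ZMod 3) = 0 from rfl]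
    ring
  have key : ∀ a b : ZMod 3, a ≠ 0 →
      (1 : ZMod 3) * (3 * 1 + 1) ≠ a * b ^ 2 + b * (a - 2) ∧
      (1 : ZMod 3) * (3 * 1 + 1) ≠ a * b ^ 2 - b * (a - 2) := by decide
  obtain ⟨k1, k2⟩ := key ((p : ℤ) : ZMod 3) ((m : ℤ) : ZMod 3)
    (by simpa using h3)
  constructor <;> intro h <;>
    have h' := congrArg (fun x : ℤ => (x : ZMod 3)) h <;>
    push_cast at h' <;> rw [hl] at h'
  · exact k1 h'
  · exact k2 h'
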